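/- arXiv:1501.07267 — 4 statements merged into one kernel-verified Lean document; each statement's English description precedes it below -/
import Mathlib

section
/- There exist a real constant C₁, a constant K > 0, and a natural number N such that for all natural numbers n ≥ N, |∑_{i=2}^{n} 1/ln(i) − ∫_2^n dt/ln(t) − C₁| ≤ K / ln(n). In particular, the sequence ∑_{i=2}^{n} 1/ln(i) − ∫_2^n dt/ln(t) converges as n → ∞. -/
open MeasureTheory Filter

noncomputable def flog (t : ℝ) : ℝ := 1 / Real.log t

lemma flog_contOn : ContinuousOn flog (Set.Ici 2) := by
  apply ContinuousOn.div continuousOn_const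
  · exact Real.continuousOn_log.mono (by
      intro x hx
      simp only [Set.mem_Ici] at hx
      simp only [Set.mem_compl_iff, Set.mem_singleton_iff]
      intro h; rw [h] at hx; norm_num at hx)
  · intro x hx
    simp only [Set.mem_Ici] at hx
    exact ne_of_gt (Real.log_pos (by linarith))

lemma flog_intble {a b : ℝ} (ha : 2 ≤ a) (hb : 2 ≤ b) :
    IntervalIntegrable flog volume a b := by
  apply (flog_contOn.mono ?_).intervalIntegrable
  intro x hx
  exact le_trans (le_min ha hb) hx.1

lemma flog_anti {x y : ℝ} (hx : 2 ≤ x) (hxy : x ≤ y) : flog y ≤ flog x := by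
  apply one_div_le_one_div_of_le (Real.log_pos (by linarith))
  exact Real.log_le_log (by linarith) hxy

lemma flog_nonneg {x : ℝ} (hx : 2 ≤ x) : 0 ≤ flog x :=
  le_of_lt (by exact one_div_pos.2 (Real.log_pos (by linarith)))

lemma int_step_ge {x : ℝ} (hx : 2 ≤ x) :
    flog (x+1) ≤ ∫ t in x..(x+1), flog t := by
  have h := intervalIntegral.integral_mono_on (by linarith : x ≤ x+1)
    (intervalIntegrable_const (c := flog (x+1)))
    (flog_intble hx (by linarith))
    (fun t ht => flog_anti (le_trans hx ht.1) ht.2)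
  simpa using h

lemma int_step_le {x : ℝ} (hx : 2 ≤ x) :
    (∫ t in x..(x+1), flog t) ≤ flog x := by
  have h := intervalIntegral.integral_mono_on (by linarith : x ≤ x+1)
    (flog_intble hx (by linarith))
    (intervalIntegrable_const (c := flog x))
    (fun t ht => flog_anti hx ht.1)
  simpa using h

noncomputable def Sseq (n : ℕ) : ℝ :=
  (∑ i ∈ Finset.Icc 2 n, flog i) - ∫ t in (2:ℝ)..(n:ℝ), flog t

lemma Sseq_step (n : ℕ) (hn : 2 ≤ n) :
    Sseq (n+1) = Sseq n + flog (n+1) - ∫ t in (n:ℝ)..((n:ℝ)+1), flog t := by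
  have hsum : (∑ i ∈ Finset.Icc 2 (n+1), flog i)
      = (∑ i ∈ Finset.Icc 2 n, flog i) + flog (n+1) := by
    rw [Finset.sum_Icc_succ_top (by omega : 2 ≤ n + 1)]
    push_cast; ring_nf
  have hint : (∫ t in (2:ℝ)..((n:ℝ)+1), flog t)
      = (∫ t in (2:ℝ)..(n:ℝ), flog t) + ∫ t in (n:ℝ)..((n:ℝ)+1), flog t := by
    rw [intervalIntegral.integral_add_adjacent_intervals]
    · exact flog_intble (by norm_num) (by exact_mod_cast hn)
    · exact flog_intble (by exact_mod_cast hn) (by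
        have : (2:ℝ) ≤ n := by exact_mod_cast hn
        linarith)
  simp only [Sseq]
  push_cast
  rw [hsum, hint]
  ring

noncomputable def wseq (k : ℕ) : ℝ := Sseq (k + 2)
noncomputable def vseq (k : ℕ) : ℝ := Sseq (k + 2) - flog ((k:ℝ) + 2)

lemma cast2 (k : ℕ) : (2:ℝ) ≤ (k:ℝ) + 2 := by
  have := Nat.cast_nonneg (α := ℝ) k; linarith

lemma w_anti : Antitone wseq := by
  apply antitone_nat_of_succ_le
  intro k
  have hstep := Sseq_step (k + 2) (by omega)
  have hge := int_step_ge (x := (k:ℝ) + 2) (cast2 k)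
  simp only [wseq]
  have : k + 1 + 2 = (k + 2) + 1 := by omega
  rw [this, hstep]
  push_cast at hge ⊢
  linarith

lemma v_mono : Monotone vseq := by
  apply monotone_nat_of_le_succ
  intro k
  have hstep := Sseq_step (k + 2) (by omega)
  have hle := int_step_le (x := (k:ℝ) + 2) (cast2 k)
  simp only [vseq]
  have : k + 1 + 2 = (k + 2) + 1 := by omega
  rw [this, hstep]
  push_cast at hle ⊢
  have heq : ((k:ℝ) + 1 + 2) = (k:ℝ) + 2 + 1 := by ring
  rw [heq]
  linarith

lemma v_le_w (k : ℕ) : vseq k ≤ wseq k := by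
  have := flog_nonneg (cast2 k)
  simp only [vseq, wseq]; push_cast; linarith

lemma w_bdd : BddBelow (Set.range wseq) := by
  refine ⟨vseq 0, ?_⟩
  rintro x ⟨k, rfl⟩
  exact le_trans (v_mono (Nat.zero_le k)) (v_le_w k)

noncomputable def Climit : ℝ := ⨅ k, wseq k

lemma w_tendsto : Tendsto wseq atTop (nhds Climit) :=
  tendsto_atTop_ciInf w_anti w_bdd

lemma S_tendsto : Tendsto Sseq atTop (nhds Climit) :=
  (tendsto_add_atTop_iff_nat 2).mp w_tendsto

lemma C_le_S {n : ℕ} (hn : 2 ≤ n) : Climit ≤ Sseq n := by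
  have h : Climit ≤ wseq (n - 2) := ciInf_le w_bdd (n - 2)
  simpa only [wseq, Nat.sub_add_cancel hn] using h

lemma v_le_C {n : ℕ} (hn : 2 ≤ n) : Sseq n - flog n ≤ Climit := by
  have hcast : ((n - 2 : ℕ) : ℝ) + 2 = (n : ℝ) := by
    rw [Nat.cast_sub hn]; push_cast; ring
  have hv : vseq (n - 2) = Sseq n - flog n := by
    simp only [vseq, Nat.sub_add_cancel hn, hcast]
  rw [← hv]
  apply le_ciInf
  intro k
  rcases le_total k (n - 2) with h | h
  · exact le_trans (le_trans (v_le_w (n-2)) (w_anti h)) (le_of_eq rfl)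
  · exact le_trans (v_mono h) (v_le_w k)

theorem sum_minus_integral_one_div_log :
    ∃ C₁ : ℝ, ∃ K > (0:ℝ), ∃ N : ℕ,
      (∀ n : ℕ, n ≥ N →
        |(∑ i ∈ Finset.Icc 2 n, 1 / Real.log i) -
          (∫ t in (2:ℝ)..(n:ℝ), 1 / Real.log t) - C₁| ≤ K / Real.log n) ∧
      Tendsto (fun n : ℕ => (∑ i ∈ Finset.Icc 2 n, 1 / Real.log i) -
        ∫ t in (2:ℝ)..(n:ℝ), 1 / Real.log t) atTop (nhds C₁) := by
  refine ⟨Climit, 1, one_pos, 2, ?_, ?_⟩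
  · intro n hn
    have h1 : Climit ≤ Sseq n := C_le_S hn
    have h2 : Sseq n - flog n ≤ Climit := v_le_C hn
    have hcast : (2:ℝ) ≤ (n:ℝ) := by exact_mod_cast hn
    have h3 : 0 ≤ flog n := flog_nonneg hcast
    have hS : Sseq n = (∑ i ∈ Finset.Icc 2 n, 1 / Real.log i) -
        ∫ t in (2:ℝ)..(n:ℝ), 1 / Real.log t := rfl
    rw [← hS]
    rw [abs_le]
    simp only [flog] at h2 h3
    constructor
    · linarith
    · linarith
  · exact S_tendsto
end

section
/- There exists x₀ > 2 such that for all real x ≥ x₀: ∫_2^x dt/ln(t) − ∫_2^x dt/ln²(t) ≤ Li(x) − Li(x)²/x ≤ Li(x). (That is, the variance of the paper's second probabilistic model is at most the variance of the first probabilistic model, which is at most Li(x).) -/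
open MeasureTheory

lemma log_ne_zero_on {x : ℝ} (hx : 2 ≤ x) :
    ∀ t ∈ Set.uIcc (2:ℝ) x, Real.log t ≠ 0 := by
  intro t ht
  rw [Set.uIcc_of_le hx] at ht
  have h2 : (2:ℝ) ≤ t := ht.1
  have : (0:ℝ) < Real.log t := Real.log_pos (by linarith)
  exact ne_of_gt this

lemma cont_inv_log {x : ℝ} (hx : 2 ≤ x) :
    ContinuousOn (fun t => 1 / Real.log t) (Set.uIcc (2:ℝ) x) := by
  apply ContinuousOn.div continuousOn_const
  · exact Real.continuousOn_log.mono (by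
      intro t ht
      rw [Set.uIcc_of_le hx] at ht
      intro h; simp only [Set.mem_singleton_iff] at h; linarith [ht.1])
  · exact log_ne_zero_on hx

lemma cont_inv_log_sq {x : ℝ} (hx : 2 ≤ x) :
    ContinuousOn (fun t => 1 / (Real.log t) ^ 2) (Set.uIcc (2:ℝ) x) := by
  apply ContinuousOn.div continuousOn_const
  · exact (Real.continuousOn_log.mono (by
      intro t ht
      rw [Set.uIcc_of_le hx] at ht
      intro h; simp only [Set.mem_singleton_iff] at h; linarith [ht.1])).pow 2
  · intro t ht
    exact pow_ne_zero 2 (log_ne_zero_on hx t ht)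

lemma key_cs {x : ℝ} (hx : 3 ≤ x) :
    (∫ t in (2:ℝ)..x, 1 / Real.log t) ^ 2 ≤
      x * ∫ t in (2:ℝ)..x, 1 / (Real.log t) ^ 2 := by
  have hx2 : (2:ℝ) ≤ x := by linarith
  set f : ℝ → ℝ := fun t => 1 / Real.log t with hf_def
  have hf : IntervalIntegrable f volume 2 x := (cont_inv_log hx2).intervalIntegrable
  have hf2 : IntervalIntegrable (fun t => 1 / (Real.log t) ^ 2) volume 2 x :=
    (cont_inv_log_sq hx2).intervalIntegrable
  set I := ∫ t in (2:ℝ)..x, f t with hI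
  set J := ∫ t in (2:ℝ)..x, 1 / (Real.log t) ^ 2 with hJ
  have hd : (0:ℝ) < x - 2 := by linarith
  set c : ℝ := I / (x - 2) with hc
  -- pointwise: (f t - c)^2 = 1/(log t)^2 - 2*c*f t + c^2 on uIcc
  have hsq_eq : ∀ t ∈ Set.uIcc (2:ℝ) x,
      (f t - c) ^ 2 = 1 / (Real.log t) ^ 2 - 2 * c * f t + c ^ 2 := by
    intro t ht
    have hl := log_ne_zero_on hx2 t ht
    simp only [hf_def]
    field_simp
    ring
  have hint_sub : IntervalIntegrable (fun t => (f t - c)^2) volume 2 x := by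
    have : ContinuousOn (fun t => (f t - c)^2) (Set.uIcc (2:ℝ) x) :=
      (((cont_inv_log hx2).sub continuousOn_const).pow 2)
    exact this.intervalIntegrable
  have h0 : (0:ℝ) ≤ ∫ t in (2:ℝ)..x, (f t - c) ^ 2 :=
    intervalIntegral.integral_nonneg hx2 (fun t _ => sq_nonneg _)
  have hexp : (∫ t in (2:ℝ)..x, (f t - c) ^ 2)
      = J - 2 * c * I + c ^ 2 * (x - 2) := by
    have h1 : (∫ t in (2:ℝ)..x, (f t - c) ^ 2)
        = ∫ t in (2:ℝ)..x, (1 / (Real.log t) ^ 2 - 2 * c * f t + c ^ 2) := by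
      apply intervalIntegral.integral_congr
      intro t ht
      exact hsq_eq t ht
    rw [h1]
    have hi1 : IntervalIntegrable (fun t => 2 * c * f t) volume 2 x := hf.const_mul _
    have hi2 : IntervalIntegrable (fun t => 1 / (Real.log t) ^ 2 - 2 * c * f t) volume 2 x :=
      hf2.sub hi1
    rw [intervalIntegral.integral_add hi2 intervalIntegrable_const,
        intervalIntegral.integral_sub hf2 hi1,
        intervalIntegral.integral_const_mul, intervalIntegral.integral_const]
    rw [smul_eq_mul]
    ring
  have hJ0 : (0:ℝ) ≤ J :=
    intervalIntegral.integral_nonneg hx2 (fun t _ => by positivity)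
  have hkey : I ^ 2 ≤ (x - 2) * J := by
    have : 0 ≤ J - 2 * c * I + c ^ 2 * (x - 2) := hexp ▸ h0
    have hc' : c * (x - 2) = I := by rw [hc]; field_simp [hd.ne']
    nlinarith [sq_nonneg (c * (x-2) - I)]
  nlinarith

theorem variance_comparison :
    ∃ x₀ > (2:ℝ), ∀ x ≥ x₀,
      (∫ t in (2:ℝ)..x, 1 / Real.log t) - (∫ t in (2:ℝ)..x, 1 / (Real.log t) ^ 2) ≤
        (∫ t in (2:ℝ)..x, 1 / Real.log t) - (∫ t in (2:ℝ)..x, 1 / Real.log t) ^ 2 / x ∧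
      (∫ t in (2:ℝ)..x, 1 / Real.log t) - (∫ t in (2:ℝ)..x, 1 / Real.log t) ^ 2 / x ≤
        ∫ t in (2:ℝ)..x, 1 / Real.log t := by
  refine ⟨3, by norm_num, fun x hx => ?_⟩
  have hx3 : (3:ℝ) ≤ x := hx
  have hxpos : (0:ℝ) < x := by linarith
  have hcs := key_cs hx3
  constructor
  · have : (∫ t in (2:ℝ)..x, 1 / Real.log t) ^ 2 / x ≤
        ∫ t in (2:ℝ)..x, 1 / (Real.log t) ^ 2 := by
      rw [div_le_iff₀ hxpos]
      linarith [hcs]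
    linarith
  · have : 0 ≤ (∫ t in (2:ℝ)..x, 1 / Real.log t) ^ 2 / x := by positivity
    linarith
end

section
/- There exists a constant C > 0 such that for every natural number N ≥ 3, ∑_{k=1}^{N} 1/√(φ(k)) ≤ C · √(N · ln(ln N)). -/
open Finset

lemma my_totient_sq_bound : ∀ n : ℕ, n ≤ 2 * n.totient ^ 2 ∧ (¬ 2 ∣ n → n ≤ n.totient ^ 2) := by
  intro n
  induction n using Nat.recOnPosPrimePosCoprime with
  | prime_pow p k hp hk =>
      have hp' : p.Prime := hp
      have hφ : (p ^ k).totient = p ^ (k - 1) * (p - 1) := Nat.totient_prime_pow hp' hk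
      have hpk : p ^ k = p ^ (k - 1) * p := by
        rw [← pow_succ]
        congr 1
        omega
      have hq1 : 1 ≤ p ^ (k - 1) := Nat.one_le_pow _ _ hp'.pos
      rcases hp'.eq_two_or_odd' with h2 | hodd
      · subst h2
        refine ⟨?_, fun h => absurd (dvd_pow_self 2 hk.ne') h⟩
        rw [hφ, hpk]
        nlinarith [hq1]
      · have hne2 : p ≠ 2 := by rintro rfl; exact (Nat.not_odd_iff_even.mpr even_two) hodd
        have hp3 : 3 ≤ p := by have := hp'.two_le; omega
        have key : p ^ k ≤ ((p ^ k).totient) ^ 2 := by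
          obtain ⟨s, rfl⟩ : ∃ s, p = s + 3 := ⟨p - 3, by omega⟩
          rw [hφ, hpk]
          have h31 : s + 3 - 1 = s + 2 := by omega
          rw [h31]
          set q := (s + 3) ^ (k - 1)
          calc q * (s + 3) ≤ (q * q) * ((s + 2) * (s + 2)) :=
                Nat.mul_le_mul (Nat.le_mul_of_pos_left q (by omega)) (by nlinarith)
          _ = (q * (s + 2)) ^ 2 := by ring
        exact ⟨key.trans (by nlinarith [key]), fun _ => key⟩
  | zero => simp
  | one => simp
  | coprime a b ha hb hab iha ihb =>
      have hφ : (a * b).totient = a.totient * b.totient := Nat.totient_mul hab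
      obtain ⟨ha2, haodd⟩ := iha
      obtain ⟨hb2, hbodd⟩ := ihb
      by_cases h2a : 2 ∣ a
      · have h2b : ¬ 2 ∣ b := by
          intro h2b
          have h := Nat.dvd_gcd h2a h2b
          rw [Nat.Coprime] at hab
          rw [hab] at h
          omega
        refine ⟨?_, fun h => absurd (h2a.mul_right b) h⟩
        rw [hφ, mul_pow]
        calc a * b ≤ (2 * a.totient ^ 2) * (b.totient ^ 2) := Nat.mul_le_mul ha2 (hbodd h2b)
        _ = 2 * (a.totient ^ 2 * b.totient ^ 2) := by ring
      · by_cases h2b : 2 ∣ b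
        · refine ⟨?_, fun h => absurd (h2b.mul_left a) h⟩
          rw [hφ, mul_pow]
          calc a * b ≤ (a.totient ^ 2) * (2 * b.totient ^ 2) := Nat.mul_le_mul (haodd h2a) hb2
          _ = 2 * (a.totient ^ 2 * b.totient ^ 2) := by ring
        · have key : a * b ≤ (a * b).totient ^ 2 := by
            rw [hφ, mul_pow]; exact Nat.mul_le_mul (haodd h2a) (hbodd h2b)
          exact ⟨key.trans (by nlinarith [key]), fun _ => key⟩

lemma my_sqrt_le_totient (d : ℕ) : Real.sqrt d ≤ Real.sqrt 2 * d.totient := by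
  have h := (my_totient_sq_bound d).1
  have h' : (d : ℝ) ≤ 2 * (d.totient : ℝ) ^ 2 := by exact_mod_cast h
  calc Real.sqrt d ≤ Real.sqrt (2 * (d.totient : ℝ) ^ 2) := Real.sqrt_le_sqrt h'
  _ = Real.sqrt 2 * d.totient := by
      rw [Real.sqrt_mul (by norm_num : (0:ℝ) ≤ 2), Real.sqrt_sq (by positivity)]

lemma my_telescope : ∀ N : ℕ, 1 ≤ N →
    (∑ d ∈ Icc 1 N, 1 / ((d : ℝ) * Real.sqrt d)) ≤ 3 - 2 / Real.sqrt N := by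
  intro N hN
  induction N, hN using Nat.le_induction with
  | base => norm_num
  | succ N hN ih =>
    rw [Finset.sum_Icc_succ_top (by omega : 1 ≤ N + 1)]
    have ha : (0:ℝ) < Real.sqrt N := Real.sqrt_pos.mpr (by exact_mod_cast hN)
    have hb : (0:ℝ) < Real.sqrt ((N:ℝ) + 1) := Real.sqrt_pos.mpr (by positivity)
    set a := Real.sqrt N
    set b := Real.sqrt ((N:ℝ) + 1)
    have hab : a ≤ b := Real.sqrt_le_sqrt (by linarith)
    have ha2 : a ^ 2 = N := Real.sq_sqrt (by positivity)
    have hb2 : b ^ 2 = (N:ℝ) + 1 := Real.sq_sqrt (by positivity)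
    have hcast : ((N + 1 : ℕ) : ℝ) = (N : ℝ) + 1 := by push_cast; ring
    have hkey : 1 / (((N:ℝ) + 1) * b) ≤ 2 / a - 2 / b := by
      rw [div_sub_div _ _ ha.ne' hb.ne', div_le_div_iff₀ (by positivity) (by positivity)]
      have h1 : (b - a) * (b + a) = 1 := by nlinarith [ha2, hb2]
      nlinarith [h1, mul_pos ha hb, mul_nonneg (mul_nonneg hb.le hb.le) hb.le,
        mul_nonneg (sub_nonneg.mpr hab) (mul_nonneg hb.le (mul_nonneg hb.le hb.le)),
        mul_pos (mul_pos ha hb) hb, mul_pos ha (mul_pos hb hb)]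
    rw [hcast]
    linarith [ih]

lemma my_sum_inv_dtotient (N : ℕ) :
    (∑ d ∈ Icc 1 N, 1 / ((d : ℝ) * d.totient)) ≤ 5 := by
  rcases Nat.eq_zero_or_pos N with rfl | hN
  · simp
  have step : ∀ d ∈ Icc 1 N, 1 / ((d : ℝ) * d.totient) ≤
      Real.sqrt 2 * (1 / ((d : ℝ) * Real.sqrt d)) := by
    intro d hd
    rw [Finset.mem_Icc] at hd
    have hd1 : 1 ≤ d := hd.1
    have hφ : 0 < d.totient := Nat.totient_pos.mpr hd1
    have hφr : (0:ℝ) < d.totient := by exact_mod_cast hφ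
    have hdr : (0:ℝ) < d := by exact_mod_cast hd1
    have hsd : (0:ℝ) < Real.sqrt d := Real.sqrt_pos.mpr hdr
    have h := my_sqrt_le_totient d
    rw [mul_one_div, div_le_div_iff₀ (by positivity) (by positivity), one_mul]
    nlinarith [mul_le_mul_of_nonneg_left h hdr.le]
  calc (∑ d ∈ Icc 1 N, 1 / ((d : ℝ) * d.totient))
      ≤ ∑ d ∈ Icc 1 N, Real.sqrt 2 * (1 / ((d : ℝ) * Real.sqrt d)) := Finset.sum_le_sum step
  _ = Real.sqrt 2 * ∑ d ∈ Icc 1 N, 1 / ((d : ℝ) * Real.sqrt d) := by rw [Finset.mul_sum]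
  _ ≤ Real.sqrt 2 * 3 := by
        apply mul_le_mul_of_nonneg_left ?_ (Real.sqrt_nonneg 2)
        have h2 : 0 < Real.sqrt N := Real.sqrt_pos.mpr (by exact_mod_cast hN)
        have h3 : 0 ≤ 2 / Real.sqrt N := by positivity
        linarith [my_telescope N hN]
  _ ≤ 5 := by nlinarith [Real.sq_sqrt (by norm_num : (0:ℝ) ≤ 2), Real.sqrt_nonneg 2]

lemma my_div_totient_le (k : ℕ) (hk : 1 ≤ k) :
    (k : ℝ) / k.totient ≤ ∑ d ∈ k.divisors, 1 / (d.totient : ℝ) := by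
  have hφk : 0 < k.totient := Nat.totient_pos.mpr hk
  rw [div_le_iff₀ (by exact_mod_cast hφk)]
  have hcast : (k : ℝ) = ∑ d ∈ k.divisors, (d.totient : ℝ) := by
    exact_mod_cast congrArg (Nat.cast (R := ℝ)) (Nat.sum_totient k).symm
  calc (k : ℝ) = ∑ d ∈ k.divisors, (d.totient : ℝ) := hcast
  _ ≤ ∑ d ∈ k.divisors, 1 / (((k / d).totient : ℝ)) * k.totient := by
      apply Finset.sum_le_sum
      intro d hd
      rw [Nat.mem_divisors] at hd
      obtain ⟨hdvd, hk0⟩ := hd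
      have hkd : 0 < (k / d).totient :=
        Nat.totient_pos.mpr (Nat.div_pos (Nat.le_of_dvd (by omega) hdvd)
          (Nat.pos_of_dvd_of_pos hdvd (by omega)))
      have hsup : d.totient * (k / d).totient ≤ k.totient := by
        have := Nat.totient_super_multiplicative d (k / d)
        rwa [Nat.mul_div_cancel' hdvd] at this
      rw [one_div, inv_mul_eq_div, le_div_iff₀ (by exact_mod_cast hkd)]
      exact_mod_cast hsup
  _ = (∑ d ∈ k.divisors, 1 / (((k / d).totient : ℝ))) * k.totient := by rw [Finset.sum_mul]
  _ = (∑ d ∈ k.divisors, 1 / ((d.totient : ℝ))) * k.totient := by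
      rw [Nat.sum_div_divisors k (fun d => 1 / (d.totient : ℝ))]

lemma my_sum_quot (N : ℕ) :
    (∑ k ∈ Icc 1 N, (k : ℝ) / k.totient) ≤ 5 * N := by
  have hdiveq : ∀ k ∈ Icc 1 N, k.divisors = {d ∈ Icc 1 N | d ∣ k} := by
    intro k hk
    rw [Finset.mem_Icc] at hk
    ext e
    simp only [Nat.mem_divisors, Finset.mem_filter, Finset.mem_Icc]
    constructor
    · rintro ⟨he, -⟩
      exact ⟨⟨Nat.pos_of_dvd_of_pos he (by omega), (Nat.le_of_dvd (by omega) he).trans hk.2⟩, he⟩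
    · rintro ⟨-, he⟩
      exact ⟨he, by omega⟩
  have swap : (∑ k ∈ Icc 1 N, ∑ d ∈ k.divisors, 1 / (d.totient : ℝ))
      = ∑ d ∈ Icc 1 N, ((N / d : ℕ) : ℝ) * (1 / (d.totient : ℝ)) := by
    rw [Finset.sum_congr rfl (fun k hk => by rw [hdiveq k hk])]
    rw [Finset.sum_congr rfl (fun k _ => Finset.sum_filter _ _)]
    rw [Finset.sum_comm]
    apply Finset.sum_congr rfl
    intro d _
    rw [← Finset.sum_filter, Finset.sum_const, nsmul_eq_mul]
    congr 1
    have hIcc : Icc 1 N = Ioc 0 N := by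
      ext x; simp only [Finset.mem_Icc, Finset.mem_Ioc]; omega
    rw [hIcc, Nat.Ioc_filter_dvd_card_eq_div]
  calc (∑ k ∈ Icc 1 N, (k : ℝ) / k.totient)
      ≤ ∑ k ∈ Icc 1 N, ∑ d ∈ k.divisors, 1 / (d.totient : ℝ) := by
        apply Finset.sum_le_sum
        intro k hk
        rw [Finset.mem_Icc] at hk
        exact my_div_totient_le k hk.1
  _ = ∑ d ∈ Icc 1 N, ((N / d : ℕ) : ℝ) * (1 / (d.totient : ℝ)) := swap
  _ ≤ ∑ d ∈ Icc 1 N, (N : ℝ) * (1 / ((d : ℝ) * d.totient)) := by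
        apply Finset.sum_le_sum
        intro d hd
        rw [Finset.mem_Icc] at hd
        have hd1 : (0:ℝ) < d := by exact_mod_cast hd.1
        have hφ : (0:ℝ) < d.totient := by exact_mod_cast Nat.totient_pos.mpr hd.1
        have hle : ((N / d : ℕ) : ℝ) ≤ (N : ℝ) / d := Nat.cast_div_le
        calc ((N / d : ℕ) : ℝ) * (1 / (d.totient : ℝ))
            ≤ ((N : ℝ) / d) * (1 / (d.totient : ℝ)) :=
              mul_le_mul_of_nonneg_right hle (by positivity)
        _ = (N : ℝ) * (1 / ((d : ℝ) * d.totient)) := by field_simp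
  _ = (N : ℝ) * ∑ d ∈ Icc 1 N, 1 / ((d : ℝ) * d.totient) := by rw [Finset.mul_sum]
  _ ≤ (N : ℝ) * 5 := mul_le_mul_of_nonneg_left (my_sum_inv_dtotient N) (by positivity)
  _ = 5 * N := by ring

lemma my_main_sqrt : ∀ N : ℕ,
    (∑ k ∈ Icc 1 N, 1 / Real.sqrt (Nat.totient k)) ≤ 30 * Real.sqrt N := by
  intro N
  induction N using Nat.strong_induction_on with
  | _ N ih =>
    rcases Nat.eq_zero_or_pos N with rfl | hN
    · simp
    set M := N / 2 with hM
    have hMN : M < N := Nat.div_lt_self hN one_lt_two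
    have hNr : (0:ℝ) < N := by exact_mod_cast hN
    have hsN : (0:ℝ) < Real.sqrt N := Real.sqrt_pos.mpr hNr
    have hsplit : (∑ k ∈ Icc 1 N, 1 / Real.sqrt (Nat.totient k))
        = (∑ k ∈ Icc 1 M, 1 / Real.sqrt (Nat.totient k))
          + ∑ k ∈ Ioc M N, 1 / Real.sqrt (Nat.totient k) := by
      have h1 : ∀ m : ℕ, Icc 1 m = Ioc 0 m := by
        intro m; ext x; simp only [Finset.mem_Icc, Finset.mem_Ioc]; omega
      rw [h1 N, h1 M, Finset.sum_Ioc_consecutive _ (Nat.zero_le M) hMN.le]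
    have htail : (∑ k ∈ Ioc M N, 1 / Real.sqrt (Nat.totient k))
        ≤ (Real.sqrt 2 / Real.sqrt N) * (5 * N) := by
      calc (∑ k ∈ Ioc M N, 1 / Real.sqrt (Nat.totient k))
          ≤ ∑ k ∈ Ioc M N, (Real.sqrt 2 / Real.sqrt N) * ((k:ℝ) / k.totient) := by
            apply Finset.sum_le_sum
            intro k hk
            rw [Finset.mem_Ioc] at hk
            have hk1 : 1 ≤ k := by omega
            have hφ : 0 < k.totient := Nat.totient_pos.mpr hk1
            have hφr : (0:ℝ) < k.totient := by exact_mod_cast hφ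
            have hkr : (0:ℝ) < k := by exact_mod_cast hk1
            have hsk : (0:ℝ) < Real.sqrt k := Real.sqrt_pos.mpr hkr
            have hsφ : (0:ℝ) < Real.sqrt k.totient := Real.sqrt_pos.mpr hφr
            have h2k : (N:ℝ) ≤ 2 * k := by
              have : N ≤ 2 * k := by omega
              exact_mod_cast this
            have hquot1 : (1:ℝ) ≤ (k:ℝ) / k.totient := by
              rw [le_div_iff₀ hφr, one_mul]
              exact_mod_cast Nat.totient_le k
            have step1 : 1 / Real.sqrt k.totient
                = Real.sqrt ((k:ℝ) / k.totient) * (1 / Real.sqrt k) := by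
              rw [Real.sqrt_div hkr.le]
              field_simp
            have step2 : Real.sqrt ((k:ℝ) / k.totient) ≤ (k:ℝ) / k.totient := by
              have hs := Real.sq_sqrt (by positivity : (0:ℝ) ≤ (k:ℝ) / k.totient)
              nlinarith [Real.sqrt_nonneg ((k:ℝ) / k.totient), hquot1]
            have step3 : 1 / Real.sqrt k ≤ Real.sqrt 2 / Real.sqrt N := by
              rw [div_le_div_iff₀ hsk hsN, one_mul]
              calc Real.sqrt N ≤ Real.sqrt (2 * k) := Real.sqrt_le_sqrt h2k
              _ = Real.sqrt 2 * Real.sqrt k := Real.sqrt_mul (by norm_num) _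
            calc 1 / Real.sqrt k.totient
                = Real.sqrt ((k:ℝ) / k.totient) * (1 / Real.sqrt k) := step1
            _ ≤ ((k:ℝ) / k.totient) * (Real.sqrt 2 / Real.sqrt N) :=
                mul_le_mul step2 step3 (by positivity) (by positivity)
            _ = (Real.sqrt 2 / Real.sqrt N) * ((k:ℝ) / k.totient) := by ring
      _ = (Real.sqrt 2 / Real.sqrt N) * ∑ k ∈ Ioc M N, (k:ℝ) / k.totient := by
            rw [Finset.mul_sum]
      _ ≤ (Real.sqrt 2 / Real.sqrt N) * ∑ k ∈ Icc 1 N, (k:ℝ) / k.totient := by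
            apply mul_le_mul_of_nonneg_left ?_ (by positivity)
            apply Finset.sum_le_sum_of_subset_of_nonneg
            · intro x hx
              rw [Finset.mem_Ioc] at hx
              rw [Finset.mem_Icc]
              omega
            · intro k _ _
              positivity
      _ ≤ (Real.sqrt 2 / Real.sqrt N) * (5 * N) :=
            mul_le_mul_of_nonneg_left (my_sum_quot N) (by positivity)
    have htail2 : (Real.sqrt 2 / Real.sqrt N) * (5 * N) = 5 * Real.sqrt 2 * Real.sqrt N := by
      have h : Real.sqrt 2 / Real.sqrt N * (5 * N) = 5 * Real.sqrt 2 * ((N:ℝ) / Real.sqrt N) := by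
        ring
      rw [h, Real.div_sqrt]
    have hhead : (∑ k ∈ Icc 1 M, 1 / Real.sqrt (Nat.totient k)) ≤ 30 * Real.sqrt M := ih M hMN
    have hB : Real.sqrt 2 * Real.sqrt M ≤ Real.sqrt N := by
      rw [← Real.sqrt_mul (by norm_num)]
      apply Real.sqrt_le_sqrt
      have h2M : 2 * M ≤ N := by omega
      calc (2:ℝ) * M = ((2 * M : ℕ) : ℝ) := by push_cast; ring
      _ ≤ N := by exact_mod_cast h2M
    have h22 : Real.sqrt 2 * Real.sqrt 2 = 2 := Real.mul_self_sqrt (by norm_num)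
    have hs2 : Real.sqrt 2 ≤ 3 / 2 := by nlinarith [Real.sqrt_nonneg 2, h22]
    have hs2n : (0:ℝ) ≤ Real.sqrt 2 := Real.sqrt_nonneg 2
    have hsMn : (0:ℝ) ≤ Real.sqrt M := Real.sqrt_nonneg M
    rw [hsplit]
    rw [htail2] at htail
    nlinarith [hhead, htail, hB, h22, hs2, hs2n, hsMn, hsN,
      mul_le_mul_of_nonneg_left hB (mul_nonneg (by norm_num : (0:ℝ) ≤ 15) hs2n),
      mul_le_mul_of_nonneg_right hs2 hsN.le]

theorem sum_inv_sqrt_totient_le :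
    ∃ C > (0:ℝ), ∀ N : ℕ, 3 ≤ N →
      (∑ k ∈ Finset.Icc 1 N, 1 / Real.sqrt (Nat.totient k)) ≤
        C * Real.sqrt (N * Real.log (Real.log N)) := by
  have hlog3 : 1 < Real.log 3 := by
    have he : Real.exp 1 < 3 := by
      have := Real.exp_one_lt_d9
      linarith
    calc (1:ℝ) = Real.log (Real.exp 1) := (Real.log_exp 1).symm
    _ < Real.log 3 := Real.log_lt_log (Real.exp_pos 1) he
  have hL3 : 0 < Real.log (Real.log 3) := Real.log_pos hlog3
  have hsL3 : 0 < Real.sqrt (Real.log (Real.log 3)) := Real.sqrt_pos.mpr hL3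
  refine ⟨30 / Real.sqrt (Real.log (Real.log 3)), by positivity, ?_⟩
  intro N hN
  have hNr : (3:ℝ) ≤ N := by exact_mod_cast hN
  have hL : Real.log (Real.log 3) ≤ Real.log (Real.log N) := by
    apply Real.log_le_log (by linarith)
    apply Real.log_le_log (by norm_num)
    exact hNr
  have hNn : (0:ℝ) ≤ N := by linarith
  have hsq : Real.sqrt N * Real.sqrt (Real.log (Real.log 3))
      ≤ Real.sqrt (N * Real.log (Real.log N)) := by
    rw [← Real.sqrt_mul hNn]
    apply Real.sqrt_le_sqrt
    have := mul_le_mul_of_nonneg_left hL hNn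
    linarith
  calc (∑ k ∈ Finset.Icc 1 N, 1 / Real.sqrt (Nat.totient k))
      ≤ 30 * Real.sqrt N := my_main_sqrt N
  _ = (30 / Real.sqrt (Real.log (Real.log 3)))
        * (Real.sqrt N * Real.sqrt (Real.log (Real.log 3))) := by
      field_simp
  _ ≤ (30 / Real.sqrt (Real.log (Real.log 3)))
        * Real.sqrt (N * Real.log (Real.log N)) :=
      mul_le_mul_of_nonneg_left hsq (by positivity)
end

section
/- Let 0 < a < 1. There exist a constant C > 0 and x₀ > 2 such that for all real x ≥ x₀: ∑_{k=1}^{⌊x^a⌋} √(Li(x)/φ(k)) ≤ C · x^{(a+1)/2}. -/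
open MeasureTheory

open Finset Real


lemma sum_inv_sqrt (N : ℕ) : ∑ m ∈ Finset.Icc 1 N, 1 / Real.sqrt m ≤ 2 * Real.sqrt N := by
  induction N with
  | zero => simp
  | succ N ih =>
    rw [Finset.sum_Icc_succ_top (Nat.one_le_iff_ne_zero.mpr (Nat.succ_ne_zero N))]
    have hs : Real.sqrt N ^ 2 = N := Real.sq_sqrt (Nat.cast_nonneg N)
    have ht : Real.sqrt (N + 1) ^ 2 = (N : ℝ) + 1 := by
      rw [Real.sq_sqrt (by positivity)]
    have ht0 : 0 < Real.sqrt ((N : ℝ) + 1) := Real.sqrt_pos.mpr (by positivity)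
    have hs0 : 0 ≤ Real.sqrt N := Real.sqrt_nonneg _
    push_cast
    have key : 2 * Real.sqrt N * Real.sqrt ((N:ℝ)+1) + 1 ≤ 2 * Real.sqrt ((N:ℝ)+1) ^ 2 := by
      nlinarith [sq_nonneg (Real.sqrt ((N:ℝ)+1) - Real.sqrt N)]
    calc ∑ m ∈ Finset.Icc 1 N, 1 / Real.sqrt m + 1 / Real.sqrt ((N:ℝ)+1)
        ≤ 2 * Real.sqrt N + 1 / Real.sqrt ((N:ℝ)+1) := by linarith [ih]
      _ ≤ 2 * Real.sqrt ((N:ℝ)+1) := by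
          have h2 : 1 / Real.sqrt ((N:ℝ)+1) ≤ 2 * Real.sqrt ((N:ℝ)+1) - 2 * Real.sqrt N := by
            rw [div_le_iff₀ ht0]; nlinarith [key]
          linarith

lemma sum_c_le (N : ℕ) : ∑ n ∈ Finset.Icc 2 N, 1 / (((n:ℝ) - 1) * Real.sqrt n) ≤ 4 := by
  have main : ∀ M : ℕ, 1 ≤ M → ∑ n ∈ Finset.Icc 2 M, 1 / (((n:ℝ) - 1) * Real.sqrt n) ≤ 4 - 4 / Real.sqrt M := by
    intro M hM
    induction M with
    | zero => omega
    | succ M ih =>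
      rcases Nat.eq_or_lt_of_le hM with h1 | h1
      · simp [← h1]
      have hM1 : 1 ≤ M := by omega
      rw [Finset.sum_Icc_succ_top (by omega : 2 ≤ M + 1)]
      have hs : Real.sqrt M ^ 2 = M := Real.sq_sqrt (Nat.cast_nonneg M)
      have ht : Real.sqrt ((M:ℝ) + 1) ^ 2 = (M : ℝ) + 1 := Real.sq_sqrt (by positivity)
      have hs0 : 0 < Real.sqrt M := Real.sqrt_pos.mpr (by exact_mod_cast hM1)
      have ht0 : 0 < Real.sqrt ((M:ℝ) + 1) := Real.sqrt_pos.mpr (by positivity)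
      have hM1' : (1:ℝ) ≤ M := by exact_mod_cast hM1
      push_cast
      have hst : Real.sqrt M * Real.sqrt ((M:ℝ)+1) ≥ (M:ℝ) + 1/4 := by
        nlinarith [sq_nonneg (Real.sqrt M * Real.sqrt ((M:ℝ)+1) - ((M:ℝ) + 1/4)),
          mul_pos hs0 ht0, sq_nonneg (Real.sqrt M * Real.sqrt ((M:ℝ)+1))]
      have hMM : (M:ℝ) + 1 - 1 = (M:ℝ) := by ring
      have step : 1 / (((M:ℝ) + 1 - 1) * Real.sqrt ((M:ℝ)+1)) ≤ 4 / Real.sqrt M - 4 / Real.sqrt ((M:ℝ)+1) := by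
        rw [hMM, div_sub_div _ _ hs0.ne' ht0.ne', div_le_div_iff₀ (by positivity) (by positivity)]
        nlinarith [mul_pos hs0 ht0, hst]
      have ihM := ih hM1
      linarith
  rcases Nat.lt_or_ge N 2 with h | h
  · interval_cases N <;> simp
  · have := main N (by omega)
    have : 4 - 4 / Real.sqrt N ≤ 4 := by
      have : 0 ≤ 4 / Real.sqrt N := by positivity
      linarith
    linarith [main N (by omega)]

lemma sqrt_nat_prod (s : Finset ℕ) : Real.sqrt (∏ p ∈ s, (p:ℝ)) = ∏ p ∈ s, Real.sqrt p := by
  induction s using Finset.cons_induction with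
  | empty => simp
  | cons a s ha ih =>
    rw [Finset.prod_cons, Finset.prod_cons, Real.sqrt_mul (Nat.cast_nonneg a), ih]

lemma sum_multiples_le (d N : ℕ) (hd : 1 ≤ d) :
    ∑ k ∈ (Finset.Icc 1 N).filter (fun k => d ∣ k), 1 / Real.sqrt k ≤
      (1 / Real.sqrt d) * (2 * Real.sqrt N) := by
  have hsub : (Finset.Icc 1 N).filter (fun k => d ∣ k) ⊆
      (Finset.Icc 1 N).image (fun m => d * m) := by
    intro k hk
    simp only [Finset.mem_filter, Finset.mem_Icc] at hk
    obtain ⟨⟨hk1, hkN⟩, hdk⟩ := hk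
    refine Finset.mem_image.mpr ⟨k / d, ?_, Nat.mul_div_cancel' hdk⟩
    simp only [Finset.mem_Icc]
    constructor
    · exact Nat.one_le_div_iff (by omega) |>.mpr (Nat.le_of_dvd (by omega) hdk)
    · exact le_trans (Nat.div_le_self k d) hkN
  calc ∑ k ∈ (Finset.Icc 1 N).filter (fun k => d ∣ k), 1 / Real.sqrt k
      ≤ ∑ k ∈ (Finset.Icc 1 N).image (fun m => d * m), 1 / Real.sqrt k := by
        apply Finset.sum_le_sum_of_subset_of_nonneg hsub
        intro i _ _; positivity
    _ = ∑ m ∈ Finset.Icc 1 N, 1 / Real.sqrt ((d * m : ℕ)) := by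
        rw [Finset.sum_image]
        intro m₁ _ m₂ _ h
        exact Nat.eq_of_mul_eq_mul_left (by omega) h
    _ = (1 / Real.sqrt d) * ∑ m ∈ Finset.Icc 1 N, 1 / Real.sqrt m := by
        rw [Finset.mul_sum]
        refine Finset.sum_congr rfl fun m _ => ?_
        rw [Nat.cast_mul, Real.sqrt_mul (Nat.cast_nonneg d)]
        rw [div_mul_div_comm, one_mul]
    _ ≤ (1 / Real.sqrt d) * (2 * Real.sqrt N) := by
        apply mul_le_mul_of_nonneg_left (sum_inv_sqrt N) (by positivity)


lemma totient_expand (k : ℕ) (hk : 1 ≤ k) :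
    1 / Real.sqrt (Nat.totient k) ≤
      ∑ T ∈ (Nat.primeFactors k).powerset, (∏ p ∈ T, 1/((p:ℝ)-1)) / Real.sqrt k := by
  have hφ : 0 < Nat.totient k := Nat.totient_pos.mpr (by omega)
  have hφR : (0:ℝ) < (Nat.totient k : ℝ) := by exact_mod_cast hφ
  have hkR : (0:ℝ) < (k:ℝ) := by exact_mod_cast hk
  have hsk : Real.sqrt k * Real.sqrt k = (k:ℝ) := Real.mul_self_sqrt hkR.le
  have hsk0 : (0:ℝ) < Real.sqrt k := Real.sqrt_pos.mpr hkR
  -- step 1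
  have hsφ : Real.sqrt (Nat.totient k) * Real.sqrt (Nat.totient k) = (Nat.totient k : ℝ) :=
    Real.mul_self_sqrt hφR.le
  have hsφ0 : (0:ℝ) < Real.sqrt (Nat.totient k) := Real.sqrt_pos.mpr hφR
  have step1 : 1 / Real.sqrt (Nat.totient k) ≤ Real.sqrt k / (Nat.totient k : ℝ) := by
    rw [div_le_div_iff₀ hsφ0 hφR, one_mul]
    calc (Nat.totient k : ℝ) = Real.sqrt (Nat.totient k) * Real.sqrt (Nat.totient k) := hsφ.symm
      _ ≤ Real.sqrt k * Real.sqrt (Nat.totient k) := by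
          apply mul_le_mul_of_nonneg_right _ hsφ0.le
          exact Real.sqrt_le_sqrt (by exact_mod_cast Nat.totient_le k)
  -- step 2
  have step2 : Real.sqrt k / (Nat.totient k : ℝ)
      = (1 / Real.sqrt k) * ((k:ℝ) / (Nat.totient k : ℝ)) := by
    rw [div_mul_div_comm, one_mul, div_eq_div_iff hφR.ne' (by positivity)]
    linear_combination (Nat.totient k : ℝ) * hsk
  -- step 3 : Euler product
  have hQpos : (0:ℝ) < ∏ p ∈ k.primeFactors, ((p:ℝ)-1) := by
    apply Finset.prod_pos
    intro p hp
    have := (Nat.prime_of_mem_primeFactors hp).two_le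
    have : (2:ℝ) ≤ (p:ℝ) := by exact_mod_cast this
    linarith
  have h := Nat.totient_mul_prod_primeFactors k
  have hcastQ : ((∏ p ∈ k.primeFactors, (p-1) : ℕ) : ℝ)
      = ∏ p ∈ k.primeFactors, ((p:ℝ)-1) := by
    rw [Nat.cast_prod]
    refine Finset.prod_congr rfl fun p hp => ?_
    have h1 : 1 ≤ p := (Nat.prime_of_mem_primeFactors hp).one_lt.le
    push_cast [Nat.cast_sub h1]
    ring
  have hR : (Nat.totient k : ℝ) * ∏ p ∈ k.primeFactors, (p:ℝ)
      = (k:ℝ) * ∏ p ∈ k.primeFactors, ((p:ℝ)-1) := by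
    have h' : ((Nat.totient k * ∏ p ∈ k.primeFactors, p : ℕ) : ℝ)
        = ((k * ∏ p ∈ k.primeFactors, (p-1) : ℕ) : ℝ) := by exact_mod_cast congrArg (Nat.cast : ℕ → ℝ) h
    rw [Nat.cast_mul, Nat.cast_mul, hcastQ, Nat.cast_prod] at h'
    exact h'
  have step3 : (k:ℝ) / (Nat.totient k : ℝ)
      = ∏ p ∈ k.primeFactors, ((p:ℝ)/((p:ℝ)-1)) := by
    rw [Finset.prod_div_distrib, div_eq_div_iff hφR.ne' (by positivity)]
    linarith [hR]
  -- step 4 : expand product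
  have step4 : ∏ p ∈ k.primeFactors, ((p:ℝ)/((p:ℝ)-1))
      = ∑ T ∈ (Nat.primeFactors k).powerset, ∏ p ∈ T, 1/((p:ℝ)-1) := by
    have hcong : ∏ p ∈ k.primeFactors, ((p:ℝ)/((p:ℝ)-1))
        = ∏ p ∈ k.primeFactors, (1/((p:ℝ)-1) + 1) := by
      refine Finset.prod_congr rfl fun p hp => ?_
      have h2 : (2:ℝ) ≤ (p:ℝ) := by exact_mod_cast (Nat.prime_of_mem_primeFactors hp).two_le
      have hne : (p:ℝ) - 1 ≠ 0 := by linarith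
      field_simp
      ring
    rw [hcong, Finset.prod_add]
    simp
  calc 1 / Real.sqrt (Nat.totient k)
      ≤ Real.sqrt k / (Nat.totient k : ℝ) := step1
    _ = (1 / Real.sqrt k) * ((k:ℝ) / (Nat.totient k : ℝ)) := step2
    _ = ∑ T ∈ (Nat.primeFactors k).powerset, (∏ p ∈ T, 1/((p:ℝ)-1)) / Real.sqrt k := by
        rw [step3, step4, Finset.mul_sum]
        refine Finset.sum_congr rfl fun T _ => ?_
        rw [one_div, inv_mul_eq_div]

lemma key_totient_sum (N : ℕ) :
    ∑ k ∈ Finset.Icc 1 N, 1 / Real.sqrt (Nat.totient k) ≤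
      2 * Real.exp 4 * Real.sqrt N := by
  set B := Finset.Icc 2 N with hB
  have hwnonneg : ∀ T ∈ B.powerset, (0:ℝ) ≤ ∏ p ∈ T, 1/((p:ℝ)-1) := by
    intro T hT
    apply Finset.prod_nonneg
    intro p hp
    have hp2 : 2 ≤ p := (Finset.mem_Icc.mp (Finset.mem_powerset.mp hT hp)).1
    have h2 : (2:ℝ) ≤ (p:ℝ) := by exact_mod_cast hp2
    have h0 : (0:ℝ) < (p:ℝ) - 1 := by linarith
    positivity
  -- Step 1: pointwise expansion into big double sum
  have step1 : ∑ k ∈ Finset.Icc 1 N, 1 / Real.sqrt (Nat.totient k) ≤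
      ∑ k ∈ Finset.Icc 1 N, ∑ T ∈ B.powerset,
        (if T ⊆ k.primeFactors then (∏ p ∈ T, 1/((p:ℝ)-1)) / Real.sqrt k else 0) := by
    apply Finset.sum_le_sum
    intro k hk
    obtain ⟨hk1, hkN⟩ := Finset.mem_Icc.mp hk
    have hPB : k.primeFactors ⊆ B := by
      intro p hp
      rw [hB, Finset.mem_Icc]
      exact ⟨(Nat.prime_of_mem_primeFactors hp).two_le,
        le_trans (Nat.le_of_dvd (by omega) (Nat.dvd_of_mem_primeFactors hp)) hkN⟩
    have heq : ∑ T ∈ B.powerset,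
        (if T ⊆ k.primeFactors then (∏ p ∈ T, 1/((p:ℝ)-1)) / Real.sqrt k else 0)
        = ∑ T ∈ (Nat.primeFactors k).powerset, (∏ p ∈ T, 1/((p:ℝ)-1)) / Real.sqrt k := by
      rw [Finset.sum_ite, Finset.sum_const_zero, add_zero]
      apply Finset.sum_congr _ (fun _ _ => rfl)
      ext T
      simp only [Finset.mem_filter, Finset.mem_powerset]
      exact ⟨fun h => h.2, fun h => ⟨h.trans hPB, h⟩⟩
    rw [heq]
    exact totient_expand k hk1
  -- Step 2+3: swap and bound inner sums
  have step2 : ∑ k ∈ Finset.Icc 1 N, ∑ T ∈ B.powerset,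
        (if T ⊆ k.primeFactors then (∏ p ∈ T, 1/((p:ℝ)-1)) / Real.sqrt k else 0)
      ≤ ∑ T ∈ B.powerset, (∏ p ∈ T, 1/((p:ℝ)-1)) *
          ((1 / Real.sqrt (∏ p ∈ T, p : ℕ)) * (2 * Real.sqrt N)) := by
    rw [Finset.sum_comm]
    apply Finset.sum_le_sum
    intro T hT
    have hd1 : 1 ≤ ∏ p ∈ T, p := Finset.one_le_prod' fun p hp =>
      le_trans (by norm_num) (Finset.mem_Icc.mp (Finset.mem_powerset.mp hT hp)).1
    calc ∑ k ∈ Finset.Icc 1 N,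
          (if T ⊆ k.primeFactors then (∏ p ∈ T, 1/((p:ℝ)-1)) / Real.sqrt k else 0)
        ≤ ∑ k ∈ Finset.Icc 1 N,
          (if (∏ p ∈ T, p) ∣ k then (∏ p ∈ T, 1/((p:ℝ)-1)) / Real.sqrt k else 0) := by
          apply Finset.sum_le_sum
          intro k hk
          by_cases h1 : T ⊆ k.primeFactors
          · have hdvd : (∏ p ∈ T, p) ∣ k :=
              (Finset.prod_dvd_prod_of_subset _ _ _ h1).trans (Nat.prod_primeFactors_dvd k)
            simp only [h1, hdvd, if_true]
            exact le_refl _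
          · simp only [h1, if_false]
            split_ifs with h2
            · exact div_nonneg (hwnonneg T hT) (Real.sqrt_nonneg _)
            · exact le_refl 0
      _ = (∏ p ∈ T, 1/((p:ℝ)-1)) *
            ∑ k ∈ (Finset.Icc 1 N).filter (fun k => (∏ p ∈ T, p) ∣ k), 1 / Real.sqrt k := by
          rw [← Finset.sum_filter, Finset.mul_sum]
          refine Finset.sum_congr rfl fun k _ => ?_
          rw [mul_one_div]
      _ ≤ (∏ p ∈ T, 1/((p:ℝ)-1)) * ((1 / Real.sqrt (∏ p ∈ T, p : ℕ)) * (2 * Real.sqrt N)) := by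
          exact mul_le_mul_of_nonneg_left (sum_multiples_le _ N hd1) (hwnonneg T hT)
  -- Step 4+5+6: evaluate the T-sum
  have step3 : ∑ T ∈ B.powerset, (∏ p ∈ T, 1/((p:ℝ)-1)) *
          ((1 / Real.sqrt (∏ p ∈ T, p : ℕ)) * (2 * Real.sqrt N))
      ≤ Real.exp 4 * (2 * Real.sqrt N) := by
    have hrw : ∀ T ∈ B.powerset, (∏ p ∈ T, 1/((p:ℝ)-1)) *
          ((1 / Real.sqrt (∏ p ∈ T, p : ℕ)) * (2 * Real.sqrt N))
        = (∏ p ∈ T, 1/(((p:ℝ)-1) * Real.sqrt p)) * (2 * Real.sqrt N) := by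
      intro T hT
      rw [← mul_assoc]
      congr 1
      rw [Nat.cast_prod, sqrt_nat_prod, mul_one_div, ← Finset.prod_div_distrib]
      exact Finset.prod_congr rfl fun p _ => div_div 1 _ _
    calc ∑ T ∈ B.powerset, (∏ p ∈ T, 1/((p:ℝ)-1)) *
          ((1 / Real.sqrt (∏ p ∈ T, p : ℕ)) * (2 * Real.sqrt N))
        = (∑ T ∈ B.powerset, ∏ p ∈ T, 1/(((p:ℝ)-1) * Real.sqrt p)) * (2 * Real.sqrt N) := by
          rw [Finset.sum_mul]
          exact Finset.sum_congr rfl hrw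
      _ ≤ Real.exp 4 * (2 * Real.sqrt N) := by
          apply mul_le_mul_of_nonneg_right _ (by positivity)
          calc ∑ T ∈ B.powerset, ∏ p ∈ T, 1/(((p:ℝ)-1) * Real.sqrt p)
              = ∏ n ∈ B, (1/(((n:ℝ)-1) * Real.sqrt n) + 1) := by
                rw [Finset.prod_add]
                simp
            _ ≤ ∏ n ∈ B, Real.exp (1/(((n:ℝ)-1) * Real.sqrt n)) := by
                apply Finset.prod_le_prod
                · intro n hn
                  have h2 : (2:ℝ) ≤ (n:ℝ) := by exact_mod_cast (Finset.mem_Icc.mp hn).1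
                  have h0 : (0:ℝ) < (n:ℝ) - 1 := by linarith
                  positivity
                · intro n hn
                  have := Real.add_one_le_exp (1/(((n:ℝ)-1) * Real.sqrt n))
                  linarith
            _ = Real.exp (∑ n ∈ B, 1/(((n:ℝ)-1) * Real.sqrt n)) := (Real.exp_sum _ _).symm
            _ ≤ Real.exp 4 := Real.exp_le_exp.mpr (sum_c_le N)
  have := le_trans step1 (le_trans step2 step3)
  linarith [this]

theorem sum_sqrt_li_div_totient_le (a : ℝ) (ha0 : 0 < a) (ha1 : a < 1) :
    ∃ C > (0:ℝ), ∃ x₀ > (2:ℝ), ∀ x ≥ x₀,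
      (∑ k ∈ Finset.Icc 1 ⌊x ^ a⌋₊,
          Real.sqrt ((∫ t in (2:ℝ)..x, 1 / Real.log t) / (Nat.totient k : ℝ))) ≤
        C * x ^ ((a + 1) / 2) := by
  refine ⟨4 * Real.exp 4, by positivity, 3, by norm_num, fun x hx => ?_⟩
  have hx0 : (0:ℝ) < x := by linarith
  have hx2 : (2:ℝ) ≤ x := by linarith
  set Li : ℝ := ∫ t in (2:ℝ)..x, 1 / Real.log t with hLi
  -- upper bound on Li
  have hLi_le : Li ≤ 2 * x := by
    have hb : ∀ t ∈ Set.uIoc (2:ℝ) x, ‖1 / Real.log t‖ ≤ 3/2 := by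
      intro t ht
      rw [Set.uIoc_of_le hx2] at ht
      have hlt : (2:ℝ) < t := ht.1
      have hlog : (2:ℝ)/3 < Real.log t := by
        have h2 : (0.6931471803:ℝ) < Real.log 2 := Real.log_two_gt_d9
        have : Real.log 2 ≤ Real.log t := Real.log_le_log (by norm_num) hlt.le
        linarith
      rw [Real.norm_eq_abs, abs_of_nonneg (by positivity)]
      rw [div_le_div_iff₀ (by linarith) (by norm_num)]
      linarith
    have := intervalIntegral.norm_integral_le_of_norm_le_const hb
    rw [Real.norm_eq_abs] at this
    have h1 : Li ≤ |Li| := le_abs_self Li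
    have h2 : |x - 2| = x - 2 := abs_of_nonneg (by linarith)
    rw [h2] at this
    nlinarith
  have hN : ((⌊x ^ a⌋₊ : ℕ) : ℝ) ≤ x ^ a := Nat.floor_le (Real.rpow_nonneg hx0.le a)
  -- pointwise bound
  have hpoint : ∀ k ∈ Finset.Icc 1 ⌊x ^ a⌋₊,
      Real.sqrt (Li / (Nat.totient k : ℝ)) ≤
        Real.sqrt (2 * x) * (1 / Real.sqrt (Nat.totient k)) := by
    intro k hk
    have hk1 : 1 ≤ k := (Finset.mem_Icc.mp hk).1
    have hφ : 0 < Nat.totient k := Nat.totient_pos.mpr (by omega)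
    have hφR : (0:ℝ) < (Nat.totient k : ℝ) := by exact_mod_cast hφ
    have h1 : Li / (Nat.totient k : ℝ) ≤ (2 * x) / (Nat.totient k : ℝ) := by
      gcongr
    calc Real.sqrt (Li / (Nat.totient k : ℝ))
        ≤ Real.sqrt ((2 * x) / (Nat.totient k : ℝ)) := Real.sqrt_le_sqrt h1
      _ = Real.sqrt (2 * x) / Real.sqrt (Nat.totient k) := Real.sqrt_div (by linarith) _
      _ = Real.sqrt (2 * x) * (1 / Real.sqrt (Nat.totient k)) := by rw [mul_one_div]
  calc ∑ k ∈ Finset.Icc 1 ⌊x ^ a⌋₊, Real.sqrt (Li / (Nat.totient k : ℝ))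
      ≤ ∑ k ∈ Finset.Icc 1 ⌊x ^ a⌋₊, Real.sqrt (2 * x) * (1 / Real.sqrt (Nat.totient k)) :=
        Finset.sum_le_sum hpoint
    _ = Real.sqrt (2 * x) * ∑ k ∈ Finset.Icc 1 ⌊x ^ a⌋₊, 1 / Real.sqrt (Nat.totient k) := by
        rw [Finset.mul_sum]
    _ ≤ Real.sqrt (2 * x) * (2 * Real.exp 4 * Real.sqrt (⌊x ^ a⌋₊ : ℕ)) := by
        apply mul_le_mul_of_nonneg_left (key_totient_sum _) (Real.sqrt_nonneg _)
    _ ≤ Real.sqrt (2 * x) * (2 * Real.exp 4 * Real.sqrt (x ^ a)) := by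
        gcongr
    _ ≤ 4 * Real.exp 4 * x ^ ((a + 1) / 2) := by
        rw [Real.sqrt_mul (by norm_num) x]
        have hxs : Real.sqrt x = x ^ ((1:ℝ)/2) := Real.sqrt_eq_rpow x
        have hxa : Real.sqrt (x ^ a) = x ^ (a/2) := by
          rw [Real.sqrt_eq_rpow, ← Real.rpow_mul hx0.le, show a * (1/2) = a/2 by ring]
        rw [hxs, hxa]
        have hmul : x ^ ((1:ℝ)/2) * x ^ (a/2) = x ^ ((a+1)/2) := by
          rw [← Real.rpow_add hx0]
          ring_nf
        have hs2 : Real.sqrt 2 ≤ 2 := by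
          nlinarith [Real.sq_sqrt (by norm_num : (0:ℝ) ≤ 2), Real.sqrt_nonneg 2]
        have hrp : (0:ℝ) ≤ x ^ ((1:ℝ)/2) * x ^ (a/2) := by positivity
        calc Real.sqrt 2 * x ^ ((1:ℝ)/2) * (2 * Real.exp 4 * x ^ (a/2))
            = (Real.sqrt 2 * 2 * Real.exp 4) * (x ^ ((1:ℝ)/2) * x ^ (a/2)) := by ring
          _ ≤ (2 * 2 * Real.exp 4) * (x ^ ((1:ℝ)/2) * x ^ (a/2)) := by
              apply mul_le_mul_of_nonneg_right _ hrp
              have : (0:ℝ) < Real.exp 4 := Real.exp_pos 4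
              nlinarith
          _ = 4 * Real.exp 4 * x ^ ((a+1)/2) := by rw [hmul]; ring
end
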